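/- Let X be a finite alphabet and F a finite nonempty set of words over X, each of length at least 2, with l + 1 the maximal length of a word of F. Let M be the adjacency matrix of the Ufnarovski graph, an L_l × L_l matrix over ℝ with M(u,v) = 1 if some legal (l+1)-word has prefix u and suffix v and M(u,v) = 0 otherwise, and let ρ be the spectral radius of M over ℂ. Then the sequence |L_n|^{1/n} tends to ρ as n → ∞; that is, the algebraic entropy of the finitely presented monomial algebra equals the spectral radius of the adjacency matrix of its Ufnarovski graph. -/

import Mathlib

/-- A word is *legal* (with respect to the set of forbidden words `F`) if no element of `F`
is a contiguous factor of it. -/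
def ListLegal {X : Type*} (F : Set (List X)) (w : List X) : Prop :=
  ∀ f ∈ F, ∀ u v : List X, w ≠ u ++ f ++ v

instance {X : Type*} [Finite X] (F : Set (List X)) (l : ℕ) :
    Finite {w : List X // w.length = l ∧ ListLegal F w} :=
  (Set.Finite.subset (List.finite_length_eq X l) fun _ hw => hw.1).to_subtype

noncomputable instance {X : Type*} [Finite X] (F : Set (List X)) (l : ℕ) :
    Fintype {w : List X // w.length = l ∧ ListLegal F w} :=
  Fintype.ofFinite _

open Filter

set_option linter.unusedSectionVars false

namespace UfnAux

variable {X : Type*} {F : Set (List X)}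

theorem legal_infix {w w' : List X} (h : ListLegal F w) (h' : w' <:+: w) :
    ListLegal F w' := by
  intro f hf u v huv
  obtain ⟨s, t, hst⟩ := h'
  exact h f hf (s ++ u) (v ++ t) (by rw [← hst, huv]; simp)

theorem legal_take {w : List X} (h : ListLegal F w) (n : ℕ) : ListLegal F (w.take n) :=
  legal_infix h (w.take_prefix n).isInfix

theorem legal_drop {w : List X} (h : ListLegal F w) (n : ℕ) : ListLegal F (w.drop n) :=
  legal_infix h (w.drop_suffix n).isInfix

theorem legal_of_take_drop {l n : ℕ} (hFle : ∀ f ∈ F, f.length ≤ l + 1)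
    {w : List X} (hw : w.length = n + 1) (hn : l ≤ n)
    (h1 : ListLegal F (w.take n)) (h2 : ListLegal F (w.drop (n - l))) :
    ListLegal F w := by
  intro f hf u v huv
  have hfl : f.length ≤ l + 1 := hFle f hf
  have hlen : u.length + f.length + v.length = n + 1 := by
    have := congrArg List.length huv
    simp [hw] at this
    omega
  rcases eq_or_ne v [] with rfl | hv
  · -- f is a suffix of w
    simp only [List.length_nil] at hlen
    have hul : n - l ≤ u.length := by omega
    refine h2 f hf (u.drop (n - l)) [] ?_
    rw [huv, List.append_nil, List.drop_append,
      Nat.sub_eq_zero_of_le hul, List.drop_zero, List.append_nil]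
  · -- f fits inside w.take n
    have hv1 : 1 ≤ v.length := List.length_pos_iff.mpr hv
    refine h1 f hf u (v.take (n - (u.length + f.length))) ?_
    rw [huv, List.append_assoc, List.take_append,
      List.take_of_length_le (by omega), List.take_append,
      List.take_of_length_le (by omega), List.append_assoc]
    congr 3
    omega


theorem finite_aux {X : Type*} [Finite X] (n : ℕ) (p q : List X → Prop) :
    Finite {w : List X // (w.length = n ∧ p w) ∧ q w} :=
  (Set.Finite.subset (List.finite_length_eq X n) fun _ hw => hw.1.1).to_subtype

theorem card_fiber_sum {β V : Type*} [Finite β] [Fintype V] (g : β → V) :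
    Nat.card β = ∑ v : V, Nat.card {b : β // g b = v} := by
  classical
  haveI : Fintype β := Fintype.ofFinite β
  rw [Nat.card_eq_fintype_card, ← Fintype.card_congr (Equiv.sigmaFiberEquiv g),
    Fintype.card_sigma]
  exact Finset.sum_congr rfl fun v _ => (Nat.card_eq_fintype_card).symm

section

variable [Finite X] (F : Set (List X)) (l : ℕ)

/-- The edge relation of the Ufnarovski graph. -/
def E (u v : List X) : Prop :=
  ∃ w : List X, w.length = l + 1 ∧ ListLegal F w ∧ w.take l = u ∧ w.drop 1 = v

open Classical in
/-- The adjacency matrix over ℕ. -/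
noncomputable def Nmat :
    Matrix {u : List X // u.length = l ∧ ListLegal F u}
      {u : List X // u.length = l ∧ ListLegal F u} ℕ :=
  fun u v => if E F l u.1 v.1 then 1 else 0

variable {F l}

theorem card_c_zero (v : {u : List X // u.length = l ∧ ListLegal F u}) :
    Nat.card {w : List X // (w.length = l + 0 ∧ ListLegal F w) ∧ w.drop 0 = v.1} = 1 := by
  haveI : Unique {w : List X // (w.length = l + 0 ∧ ListLegal F w) ∧ w.drop 0 = v.1} := by
    refine ⟨⟨⟨v.1, ⟨by simpa using v.2.1, v.2.2⟩, by simp⟩⟩, ?_⟩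
    rintro ⟨w, hw, hw2⟩
    apply Subtype.ext
    simpa using hw2
  exact Nat.card_unique

theorem card_fiber (hl : 1 ≤ l) (hFle : ∀ f ∈ F, f.length ≤ l + 1) (k : ℕ)
    (u v : {u : List X // u.length = l ∧ ListLegal F u}) :
    Nat.card {w : List X // ((w.length = l + (k + 1) ∧ ListLegal F w) ∧
        w.drop (k + 1) = v.1) ∧ (w.drop k).take l = u.1}
      = Nat.card {w : List X // (w.length = l + k ∧ ListLegal F w) ∧ w.drop k = u.1}
        * Nmat F l u v := by
  classical
  by_cases hE : E F l u.1 v.1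
  · -- the edge exists; the witness letter can be appended
    rw [Nmat, if_pos hE, mul_one]
    refine Nat.card_eq_of_bijective
      (fun w => ⟨w.1.take (l + k), ⟨?_, ?_⟩, ?_⟩) ⟨?_, ?_⟩
    · simp [w.2.1.1.1]
    · exact legal_take w.2.1.1.2 _
    · -- (take (l+k) w).drop k = u
      rw [List.drop_take]
      simpa [Nat.add_sub_cancel_left, Nat.add_comm l k] using w.2.2
    · -- injective
      rintro ⟨w₁, hw₁⟩ ⟨w₂, hw₂⟩ h
      have h' : w₁.take (l + k) = w₂.take (l + k) := congrArg Subtype.val h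
      have key : ∀ w : List X, ((w.length = l + (k + 1) ∧ ListLegal F w) ∧
          w.drop (k + 1) = v.1) ∧ (w.drop k).take l = u.1 →
          w.drop (l + k) = v.1.drop (l - 1) := by
        intro w hw
        rw [← hw.1.2]
        rw [List.drop_drop]
        congr 1
        omega
      apply Subtype.ext
      show w₁ = w₂
      rw [← List.take_append_drop (l + k) w₁, ← List.take_append_drop (l + k) w₂,
        h', key w₁ hw₁, key w₂ hw₂]
    · -- surjective
      rintro ⟨w', hw'⟩
      obtain ⟨e, he1, he2, he3, he4⟩ := hE
      have hwl : w'.length = l + k := hw'.1.1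
      have htake : (w' ++ e.drop l).take (l + k) = w' := by
        rw [← hwl]; exact List.take_left
      have hsub : k - w'.length = 0 := by omega
      have hdropk : (w' ++ e.drop l).drop k = e := by
        rw [List.drop_append, hw'.2, hsub, List.drop_zero, ← he3,
          List.take_append_drop]
      have hlen : (w' ++ e.drop l).length = l + (k + 1) := by
        simp only [List.length_append, List.length_drop, hwl, he1]; omega
      refine ⟨⟨w' ++ e.drop l, ⟨⟨hlen, ?_⟩, ?_⟩, ?_⟩, ?_⟩
      · -- legality
        refine legal_of_take_drop (l := l) (n := l + k) hFle (by rw [hlen]; ring_nf) (by omega)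
          ?_ ?_
        · rw [htake]; exact hw'.1.2
        · have h2 : l + k - l = k := by omega
          rw [h2, hdropk]; exact he2
      · -- suffix is v
        rw [← List.drop_drop, hdropk, he4]
      · -- window is u
        rw [hdropk, he3]
      · -- maps back to w'
        exact Subtype.ext htake
  · -- no edge: the set is empty
    rw [Nmat, if_neg hE, mul_zero]
    rw [Nat.card_eq_zero]
    left
    refine ⟨fun w => hE ⟨w.1.drop k, ?_, legal_drop w.2.1.1.2 _, w.2.2, ?_⟩⟩
    · simp only [List.length_drop, w.2.1.1.1]; omega
    · rw [List.drop_drop]; exact w.2.1.2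

end


section

variable [Finite X] [DecidableEq X] {F : Set (List X)} {l : ℕ}

theorem card_c_succ (hl : 1 ≤ l) (hFle : ∀ f ∈ F, f.length ≤ l + 1) (k : ℕ)
    (v : {u : List X // u.length = l ∧ ListLegal F u}) :
    Nat.card {w : List X // (w.length = l + (k + 1) ∧ ListLegal F w) ∧ w.drop (k + 1) = v.1}
      = ∑ u : {u : List X // u.length = l ∧ ListLegal F u},
          Nat.card {w : List X // (w.length = l + k ∧ ListLegal F w) ∧ w.drop k = u.1}
            * Nmat F l u v := by
  haveI := finite_aux (X := X) (l + (k + 1)) (ListLegal F) (fun w => w.drop (k + 1) = v.1)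
  let g : {w : List X // (w.length = l + (k + 1) ∧ ListLegal F w) ∧ w.drop (k + 1) = v.1} →
      {u : List X // u.length = l ∧ ListLegal F u} := fun w =>
    ⟨(w.1.drop k).take l, by simp only [List.length_take, List.length_drop, w.2.1.1]; omega,
      legal_take (legal_drop w.2.1.2 k) l⟩
  rw [card_fiber_sum g]
  refine Finset.sum_congr rfl fun u _ => ?_
  rw [← card_fiber hl hFle k u v]
  apply Nat.card_congr
  exact ⟨fun a => ⟨a.1.1, ⟨a.1.2, congrArg Subtype.val a.2⟩⟩,
    fun w => ⟨⟨w.1, w.2.1⟩, Subtype.ext w.2.2⟩, fun a => rfl, fun w => rfl⟩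

theorem card_total (k : ℕ) :
    Nat.card {w : List X // w.length = l + k ∧ ListLegal F w}
      = ∑ v : {u : List X // u.length = l ∧ ListLegal F u},
          Nat.card {w : List X // (w.length = l + k ∧ ListLegal F w) ∧ w.drop k = v.1} := by
  let g : {w : List X // w.length = l + k ∧ ListLegal F w} →
      {u : List X // u.length = l ∧ ListLegal F u} := fun w =>
    ⟨w.1.drop k, by simp only [List.length_drop, w.2.1]; omega, legal_drop w.2.2 k⟩
  rw [card_fiber_sum g]
  refine Finset.sum_congr rfl fun v _ => ?_
  haveI := finite_aux (X := X) (l + k) (ListLegal F) (fun w => w.drop k = v.1)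
  apply Nat.card_congr
  exact ⟨fun a => ⟨a.1.1, ⟨a.1.2, congrArg Subtype.val a.2⟩⟩,
    fun w => ⟨⟨w.1, w.2.1⟩, Subtype.ext w.2.2⟩, fun a => rfl, fun w => rfl⟩

theorem c_eq_pow (hl : 1 ≤ l) (hFle : ∀ f ∈ F, f.length ≤ l + 1) (k : ℕ)
    (v : {u : List X // u.length = l ∧ ListLegal F u}) :
    Nat.card {w : List X // (w.length = l + k ∧ ListLegal F w) ∧ w.drop k = v.1}
      = ∑ u : {u : List X // u.length = l ∧ ListLegal F u}, (Nmat F l ^ k) u v := by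
  classical
  induction k generalizing v with
  | zero =>
      rw [card_c_zero v]
      simp [Matrix.one_apply]
  | succ k ih =>
      rw [card_c_succ hl hFle k v]
      have : ∀ u, Nat.card {w : List X // (w.length = l + k ∧ ListLegal F w) ∧ w.drop k = u.1}
          = ∑ u' : {u : List X // u.length = l ∧ ListLegal F u}, (Nmat F l ^ k) u' u := ih
      simp_rw [this, Finset.sum_mul]
      rw [Finset.sum_comm]
      refine Finset.sum_congr rfl fun u' _ => ?_
      rw [pow_succ, Matrix.mul_apply]

theorem total_eq (hl : 1 ≤ l) (hFle : ∀ f ∈ F, f.length ≤ l + 1) (k : ℕ) :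
    Nat.card {w : List X // w.length = l + k ∧ ListLegal F w}
      = ∑ v : {u : List X // u.length = l ∧ ListLegal F u},
          ∑ u : {u : List X // u.length = l ∧ ListLegal F u}, (Nmat F l ^ k) u v := by
  rw [card_total k]
  exact Finset.sum_congr rfl fun v _ => c_eq_pow hl hFle k v

end


section Analysis

attribute [local instance] Matrix.linftyOpNormedAddCommGroup Matrix.linftyOpNormedRing
  Matrix.linftyOpNormedAlgebra

theorem aux_analysis {V : Type*} [Fintype V] [DecidableEq V] (N : Matrix V V ℕ)
    (M : Matrix V V ℝ) (hMN : ∀ u v, M u v = (N u v : ℝ)) (l : ℕ) (f : ℕ → ℝ)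
    (hf : ∀ n, l ≤ n → f n = ((∑ u, ∑ v, (N ^ (n - l)) u v : ℕ) : ℝ) ^ (1 / (n : ℝ))) :
    Tendsto f atTop (nhds (spectralRadius ℂ (M.map (algebraMap ℝ ℂ))).toReal) := by
  haveI : CompleteSpace (Matrix V V ℂ) := FiniteDimensional.complete ℂ _
  set A := M.map (algebraMap ℝ ℂ) with hA
  have hAN : A = (Nat.castRingHom ℂ).mapMatrix N := by
    ext i j
    simp [hA, Matrix.map_apply, hMN]
  have hApow : ∀ k i j, (A ^ k) i j = ((N ^ k) i j : ℂ) := by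
    intro k i j
    rw [hAN, ← map_pow]
    simp [Matrix.map_apply]
  -- the ℕ-valued total sum
  set t : ℕ → ℕ := fun k => ∑ u, ∑ v, (N ^ k) u v with ht
  -- norm bounds
  have hnorm : ∀ k, ‖A ^ k‖₊ = (Finset.univ.sup fun i => ∑ j, ((N ^ k) i j : NNReal)) := by
    intro k
    rw [Matrix.linfty_opNNNorm_def]
    refine Finset.sup_congr rfl fun i _ => ?_
    refine Finset.sum_congr rfl fun j _ => ?_
    rw [hApow k i j]
    exact RCLike.nnnorm_natCast _
  have h_le : ∀ k, ‖A ^ k‖₊ ≤ (t k : NNReal) := by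
    intro k
    rw [hnorm k, ht]
    refine Finset.sup_le fun i _ => ?_
    push_cast
    exact Finset.single_le_sum (f := fun i => ∑ j, ((N ^ k) i j : NNReal))
      (fun i _ => by positivity) (Finset.mem_univ i)
  have h_ge : ∀ k, (t k : NNReal) ≤ (Fintype.card V) * ‖A ^ k‖₊ := by
    intro k
    rw [hnorm k, ht]
    push_cast
    calc ∑ u, ∑ v, ((N ^ k) u v : NNReal)
        ≤ (Finset.univ : Finset V).card •
          (Finset.univ.sup fun i => ∑ j, ((N ^ k) i j : NNReal)) :=
          Finset.sum_le_card_nsmul _ _ _ fun i _ => Finset.le_sup (f := fun i => ∑ j, ((N ^ k) i j : NNReal)) (Finset.mem_univ i)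
      _ = (Fintype.card V) * (Finset.univ.sup fun i => ∑ j, ((N ^ k) i j : NNReal)) := by
          rw [nsmul_eq_mul]; simp
  -- Gelfand's formula
  have gelfand := spectrum.pow_nnnorm_pow_one_div_tendsto_nhds_spectralRadius A
  have hρtop : spectralRadius ℂ A ≠ ⊤ := by
    refine ne_top_of_le_ne_top ?_ (spectrum.spectralRadius_le_pow_nnnorm_pow_one_div ℂ A 0)
    simp only [pow_one, Nat.cast_zero, zero_add, one_div_one, ENNReal.rpow_one]
    exact ENNReal.mul_ne_top ENNReal.coe_ne_top ENNReal.coe_ne_top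
  set ρ := (spectralRadius ℂ A).toReal with hρ
  have hρ0 : 0 ≤ ρ := ENNReal.toReal_nonneg
  -- real form of Gelfand
  have hu : Tendsto (fun k : ℕ => ‖A ^ k‖ ^ (1 / (k : ℝ))) atTop (nhds ρ) := by
    have := (ENNReal.tendsto_toReal hρtop).comp gelfand
    refine this.congr fun k => ?_
    simp only [Function.comp_apply]
    rw [← ENNReal.toReal_rpow]
    simp
  -- real-valued bounds
  have ha0 : ∀ k : ℕ, 0 ≤ ‖A ^ k‖ := fun k => norm_nonneg _
  have hle : ∀ k, ‖A ^ k‖ ≤ (t k : ℝ) := fun k => by exact_mod_cast h_le k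
  have hge : ∀ k, (t k : ℝ) ≤ (Fintype.card V : ℝ) * ‖A ^ k‖ := fun k => by
    exact_mod_cast h_ge k
  set C : ℝ := max 1 (Fintype.card V : ℝ) with hC
  have hC1 : (1 : ℝ) ≤ C := le_max_left _ _
  have hCne : C ≠ 0 := by positivity
  have hge' : ∀ k, (t k : ℝ) ≤ C * ‖A ^ k‖ := fun k =>
    (hge k).trans (mul_le_mul_of_nonneg_right (le_max_right _ _) (ha0 k))
  -- the lower sequence tends to ρ
  have he : Tendsto (fun n : ℕ => ((n - l : ℕ) : ℝ) / n) atTop (nhds 1) := by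
    have h0 : Tendsto (fun n : ℕ => 1 - (l : ℝ) / n) atTop (nhds 1) := by
      have := (tendsto_const_nhds : Tendsto (fun _ : ℕ => (1 : ℝ)) atTop (nhds 1)).sub
        (tendsto_const_div_atTop_nhds_zero_nat (l : ℝ))
      simpa using this
    refine h0.congr' ?_
    filter_upwards [eventually_ge_atTop (max l 1)] with n hn
    have hln : l ≤ n := le_trans (le_max_left _ _) hn
    have hn1 : (1 : ℕ) ≤ n := le_trans (le_max_right _ _) hn
    have hnne : (n : ℝ) ≠ 0 := by positivity
    rw [Nat.cast_sub hln]
    field_simp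
  have h1 : Tendsto (fun n : ℕ => ‖A ^ (n - l)‖ ^ (1 / (n : ℝ))) atTop (nhds ρ) := by
    have hcomp : Tendsto (fun n : ℕ => ‖A ^ (n - l)‖ ^ (1 / ((n - l : ℕ) : ℝ))) atTop
        (nhds ρ) := hu.comp (tendsto_sub_atTop_nat l)
    have := hcomp.rpow he (Or.inr one_pos)
    rw [Real.rpow_one] at this
    refine this.congr' ?_
    filter_upwards [eventually_ge_atTop (l + 1)] with n hn
    rw [← Real.rpow_mul (ha0 _)]
    congr 1
    have h1 : ((n - l : ℕ) : ℝ) ≠ 0 := by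
      exact_mod_cast (by omega : (n - l : ℕ) ≠ 0)
    have h2 : (n : ℝ) ≠ 0 := by
      exact_mod_cast (by omega : n ≠ 0)
    field_simp
  -- the upper sequence tends to ρ
  have hCt : Tendsto (fun n : ℕ => C ^ (1 / (n : ℝ))) atTop (nhds 1) := by
    have := (tendsto_const_nhds : Tendsto (fun _ : ℕ => C) atTop (nhds C)).rpow
      tendsto_one_div_atTop_nhds_zero_nat (Or.inl hCne)
    simpa using this
  have h2 : Tendsto (fun n : ℕ => C ^ (1 / (n : ℝ)) * ‖A ^ (n - l)‖ ^ (1 / (n : ℝ))) atTop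
      (nhds ρ) := by
    have := hCt.mul h1
    simpa using this
  -- squeeze
  refine tendsto_of_tendsto_of_tendsto_of_le_of_le' h1 h2 ?_ ?_
  · filter_upwards [eventually_ge_atTop l] with n hn
    rw [hf n hn]
    exact Real.rpow_le_rpow (ha0 _) (hle _) (by positivity)
  · filter_upwards [eventually_ge_atTop l] with n hn
    rw [hf n hn]
    calc ((t (n - l) : ℕ) : ℝ) ^ (1 / (n : ℝ))
        ≤ (C * ‖A ^ (n - l)‖) ^ (1 / (n : ℝ)) :=
          Real.rpow_le_rpow (by positivity) (hge' _) (by positivity)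
      _ = C ^ (1 / (n : ℝ)) * ‖A ^ (n - l)‖ ^ (1 / (n : ℝ)) :=
          Real.mul_rpow (by positivity) (ha0 _)

end Analysis


end UfnAux

/-- Let `F` be a finite nonempty set of forbidden words, each of length at least `2`, with
`l + 1` the maximal length of a word of `F`.  Let `M` be the adjacency matrix of the
Ufnarovski graph: the rows and columns of `M` are indexed by the legal words of length `l`,
with `M u v = 1` if some legal word of length `l + 1` has prefix `u` and suffix `v`, and
`M u v = 0` otherwise.  Then `|L_n| ^ (1/n)` tends to the spectral radius of `M`: the
algebraic entropy of the finitely presented monomial algebra equals the spectral radius of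
the adjacency matrix of its Ufnarovski graph. -/
theorem tendsto_root_card_legal_spectralRadius
    (X : Type*) [Fintype X] [DecidableEq X] (F : Finset (List X)) (l : ℕ)
    (hF2 : ∀ f ∈ F, 2 ≤ f.length) (hFle : ∀ f ∈ F, f.length ≤ l + 1)
    (hFmax : ∃ f ∈ F, f.length = l + 1)
    (M : Matrix {u : List X // u.length = l ∧ ListLegal (↑F) u}
      {u : List X // u.length = l ∧ ListLegal (↑F) u} ℝ)
    (hM : ∀ u v : {u : List X // u.length = l ∧ ListLegal (↑F) u},
      ((∃ w : List X, w.length = l + 1 ∧ ListLegal (↑F) w ∧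
          w.take l = u.1 ∧ w.drop 1 = v.1) → M u v = 1) ∧
      ((¬ ∃ w : List X, w.length = l + 1 ∧ ListLegal (↑F) w ∧
          w.take l = u.1 ∧ w.drop 1 = v.1) → M u v = 0)) :
    Filter.Tendsto
      (fun n : ℕ =>
        (Nat.card {w : List X // w.length = n ∧ ListLegal (↑F) w} : ℝ) ^ (1 / (n : ℝ)))
      Filter.atTop
      (nhds (spectralRadius ℂ (M.map (algebraMap ℝ ℂ))).toReal) := by
  have hl : 1 ≤ l := by
    obtain ⟨f, hf, hfl⟩ := hFmax
    have := hF2 f hf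
    omega
  have hMN : ∀ u v, M u v = ((UfnAux.Nmat (↑F : Set (List X)) l) u v : ℝ) := by
    intro u v
    by_cases h : UfnAux.E (↑F : Set (List X)) l u.1 v.1
    · rw [(hM u v).1 h]; simp [UfnAux.Nmat, h]
    · rw [(hM u v).2 h]; simp [UfnAux.Nmat, h]
  refine UfnAux.aux_analysis (UfnAux.Nmat (↑F : Set (List X)) l) M hMN l _ ?_
  intro n hn
  obtain ⟨k, rfl⟩ : ∃ k, n = l + k := ⟨n - l, by omega⟩
  have h2 : l + k - l = k := by omega
  rw [h2, UfnAux.total_eq (F := (↑F : Set (List X))) hl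
    (fun f hf => hFle f (Finset.mem_coe.mp hf)) k, Finset.sum_comm]
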